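/- Let v_1, …, v_d ∈ ℤ² be a unimodular sequence of primitive vectors, i.e. ε_i = det(v_i, v_{i+1}) ∈ {+1, −1} for all i = 1, …, d (indices mod d, so v_{d+1} = v_1 and v_0 = v_d), and let a_i = ε_{i-1}^{-1} ε_i^{-1} det(v_{i+1}, v_{i-1}). Then the rotation number of the sequence v_1, …, v_d around the origin equals (1/12) ∑_{i=1}^d (3ε_i + a_i). -/

import Mathlib

set_option maxHeartbeats 1000000

/-- determinant of the 2×2 matrix with columns `v` and `w` -/
def det2 (v w : Fin 2 → ℤ) : ℤ := v 0 * w 1 - v 1 * w 0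

/-- a vector of `ℤ²` is primitive if its components are relatively prime -/
def Primitive (v : Fin 2 → ℤ) : Prop := Int.gcd (v 0) (v 1) = 1

/-- the signed angle from `v` to `w`, lying in `(-π, π]`; when `det2 v w ≠ 0` it lies in
`(-π, π)` and equals the line integral of `(-y dx + x dy)/(x² + y²)` along the segment
from `v` to `w`. -/
noncomputable def segAngle (v w : Fin 2 → ℤ) : ℝ :=
  Complex.arg (((w 0 : ℂ) + (w 1 : ℂ) * Complex.I) / ((v 0 : ℂ) + (v 1 : ℂ) * Complex.I))

/-- the rotation number of the cyclic sequence `v 0, …, v (d-1)` around the origin -/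
noncomputable def rotationNumber {d : ℕ} [NeZero d] (v : Fin d → Fin 2 → ℤ) : ℝ :=
  (1 / (2 * Real.pi)) * ∑ i : Fin d, segAngle (v i) (v (i + 1))

namespace RotAux

open Complex Real

/-- complexification -/
noncomputable def zC (v : Fin 2 → ℤ) : ℂ := (v 0 : ℂ) + (v 1 : ℂ) * Complex.I

lemma segAngle_eq (v w : Fin 2 → ℤ) : segAngle v w = Complex.arg (zC w / zC v) := rfl

@[simp] lemma zC_re (v : Fin 2 → ℤ) : (zC v).re = (v 0 : ℝ) := by simp [zC]
@[simp] lemma zC_im (v : Fin 2 → ℤ) : (zC v).im = (v 1 : ℝ) := by simp [zC]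

def nrm (v : Fin 2 → ℤ) : ℕ := (v 0).natAbs + (v 1).natAbs

def Unimod (v w : Fin 2 → ℤ) : Prop := det2 v w = 1 ∨ det2 v w = -1

lemma unimod_symm {v w : Fin 2 → ℤ} (h : Unimod v w) : Unimod w v := by
  rcases h with h | h <;> [right; left] <;> simp [det2] at h ⊢ <;> linarith

lemma det2_comm (v w : Fin 2 → ℤ) : det2 w v = - det2 v w := by simp [det2]; ring

lemma unimod_prim {v w : Fin 2 → ℤ} (h : Unimod v w) : Primitive v ∧ Primitive w := by
  constructor
  · have h1 : (Int.gcd (v 0) (v 1) : ℤ) ∣ det2 v w := by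
      have d0 : (Int.gcd (v 0) (v 1) : ℤ) ∣ v 0 := Int.gcd_dvd_left _ _
      have d1 : (Int.gcd (v 0) (v 1) : ℤ) ∣ v 1 := Int.gcd_dvd_right _ _
      exact dvd_sub (Dvd.dvd.mul_right d0 _) (Dvd.dvd.mul_right d1 _)
    have : (Int.gcd (v 0) (v 1) : ℤ) ∣ 1 := by rcases h with h | h <;> rw [h] at h1
      <;> [exact h1; exact (dvd_neg.mp h1)]
    have hg : Int.gcd (v 0) (v 1) ∣ 1 := by exact_mod_cast this
    exact Nat.dvd_one.mp hg
  · have h1 : (Int.gcd (w 0) (w 1) : ℤ) ∣ det2 v w := by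
      have d0 : (Int.gcd (w 0) (w 1) : ℤ) ∣ w 0 := Int.gcd_dvd_left _ _
      have d1 : (Int.gcd (w 0) (w 1) : ℤ) ∣ w 1 := Int.gcd_dvd_right _ _
      exact dvd_sub (Dvd.dvd.mul_left d1 _) (Dvd.dvd.mul_left d0 _)
    have : (Int.gcd (w 0) (w 1) : ℤ) ∣ 1 := by rcases h with h | h <;> rw [h] at h1
      <;> [exact h1; exact (dvd_neg.mp h1)]
    have hg : Int.gcd (w 0) (w 1) ∣ 1 := by exact_mod_cast this
    exact Nat.dvd_one.mp hg

lemma prim_nrm_pos {v : Fin 2 → ℤ} (h : Primitive v) : 1 ≤ nrm v := by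
  by_contra hc
  have h0 : (v 0).natAbs = 0 ∧ (v 1).natAbs = 0 := by unfold nrm at hc; omega
  have : v 0 = 0 := Int.natAbs_eq_zero.mp h0.1
  have : v 1 = 0 := Int.natAbs_eq_zero.mp h0.2
  unfold Primitive at h
  simp_all [Int.gcd]

lemma zC_ne_zero {v : Fin 2 → ℤ} (h : Primitive v) : zC v ≠ 0 := by
  intro hz
  have h0 : (v 0 : ℝ) = 0 := by simpa using congrArg Complex.re hz
  have h1 : (v 1 : ℝ) = 0 := by simpa using congrArg Complex.im hz
  have h0' : v 0 = 0 := by exact_mod_cast h0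
  have h1' : v 1 = 0 := by exact_mod_cast h1
  unfold Primitive at h
  simp_all [Int.gcd]

lemma im_ratio (v w : Fin 2 → ℤ) :
    (zC w / zC v).im = (det2 v w : ℝ) / Complex.normSq (zC v) := by
  rw [Complex.div_im]
  simp [det2]
  push_cast
  ring

lemma im_ratio_ne {v w : Fin 2 → ℤ} (h : Unimod v w) : (zC w / zC v).im ≠ 0 := by
  rw [im_ratio]
  have hv := zC_ne_zero (unimod_prim h).1
  have hns : 0 < Complex.normSq (zC v) := Complex.normSq_pos.mpr hv
  rcases h with h | h <;> rw [h] <;> push_cast <;> positivity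
  
lemma segAngle_pos {v w : Fin 2 → ℤ} (h : det2 v w = 1) :
    0 < segAngle v w ∧ segAngle v w < π := by
  have hU : Unimod v w := Or.inl h
  have hv := zC_ne_zero (unimod_prim hU).1
  have hns : 0 < Complex.normSq (zC v) := Complex.normSq_pos.mpr hv
  have him : 0 < (zC w / zC v).im := by rw [im_ratio, h]; positivity
  rw [segAngle_eq]
  constructor
  · rcases lt_or_eq_of_le (Complex.arg_nonneg_iff.mpr him.le) with h' | h'
    · exact h'
    · exact absurd (Complex.arg_eq_zero_iff.mp h'.symm).2 him.ne'
  · rcases lt_or_eq_of_le (Complex.arg_le_pi _) with h' | h'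
    · exact h'
    · exact absurd (Complex.arg_eq_pi_iff.mp h').2 him.ne'

lemma segAngle_neg {v w : Fin 2 → ℤ} (h : det2 v w = -1) :
    -π < segAngle v w ∧ segAngle v w < 0 := by
  have hU : Unimod v w := Or.inr h
  have hv := zC_ne_zero (unimod_prim hU).1
  have hns : 0 < Complex.normSq (zC v) := Complex.normSq_pos.mpr hv
  have him : (zC w / zC v).im < 0 := by
    rw [im_ratio, h]; push_cast
    exact div_neg_of_neg_of_pos (by norm_num) hns
  rw [segAngle_eq]
  exact ⟨Complex.neg_pi_lt_arg _, Complex.arg_neg_iff.mpr him⟩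

lemma segAngle_antisymm {v w : Fin 2 → ℤ} (h : Unimod v w) :
    segAngle w v = - segAngle v w := by
  have him := im_ratio_ne h
  rw [segAngle_eq, segAngle_eq, ← inv_div (zC w) (zC v), Complex.arg_inv]
  rw [if_neg]
  intro hpi
  exact him (Complex.arg_eq_pi_iff.mp hpi).2

lemma angle_sum (x y z : Fin 2 → ℤ) (hx : zC x ≠ 0) (hy : zC y ≠ 0) (hz : zC z ≠ 0) :
    ∃ k : ℤ, segAngle x y + segAngle y z + segAngle z x = 2 * π * k := by
  have h1 : (zC y / zC x) * (zC z / zC y) * (zC x / zC z) = 1 := by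
    field_simp
  have hd1 : zC y / zC x ≠ 0 := div_ne_zero hy hx
  have hd2 : zC z / zC y ≠ 0 := div_ne_zero hz hy
  have hd3 : zC x / zC z ≠ 0 := div_ne_zero hx hz
  have hA : ((segAngle x y + segAngle y z + segAngle z x : ℝ) : Real.Angle) = ((0 : ℝ) : Real.Angle) := by
    rw [segAngle_eq, segAngle_eq, segAngle_eq]
    rw [Real.Angle.coe_add, Real.Angle.coe_add]
    rw [← Complex.arg_mul_coe_angle hd1 hd2, ← Complex.arg_mul_coe_angle (mul_ne_zero hd1 hd2) hd3,
      h1, Complex.arg_one]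
  obtain ⟨k, hk⟩ := Real.Angle.angle_eq_iff_two_pi_dvd_sub.mp hA
  exact ⟨k, by linarith [hk]⟩

/-- index of a nonzero coordinate (for primitive `v`) -/
def idx (v : Fin 2 → ℤ) : Fin 2 := if v 0 = 0 then 1 else 0

lemma idx_ne_zero {v : Fin 2 → ℤ} (h : Primitive v) : v (idx v) ≠ 0 := by
  unfold idx
  split
  · rename_i h0
    intro h1
    unfold Primitive at h
    rw [h0, h1] at h
    simp [Int.gcd] at h
  · assumption

/-- "outgoing" half of the vertex contribution, at vertex `v` of edge `(v,w)` -/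
noncomputable def oh (v w : Fin 2 → ℤ) : ℝ :=
  -(det2 v w : ℝ) * (w (idx v) : ℝ) / (v (idx v) : ℝ)

/-- "incoming" half of the vertex contribution, at vertex `w` of edge `(v,w)` -/
noncomputable def ih (v w : Fin 2 → ℤ) : ℝ :=
  -(det2 v w : ℝ) * (v (idx w) : ℝ) / (w (idx w) : ℝ)

noncomputable def edgeVal (v w : Fin 2 → ℤ) : ℝ :=
  segAngle v w - π / 2 * (det2 v w : ℝ) - π / 6 * (oh v w + ih v w)

lemma edgeVal_antisymm {v w : Fin 2 → ℤ} (h : Unimod v w) :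
    edgeVal w v = - edgeVal v w := by
  unfold edgeVal
  rw [segAngle_antisymm h, det2_comm v w]
  have h1 : oh w v = - ih v w := by unfold oh ih; rw [det2_comm v w]; push_cast; ring
  have h2 : ih w v = - oh v w := by unfold oh ih; rw [det2_comm v w]; push_cast; ring
  rw [h1, h2]; push_cast; ring

/-- Cramer's rule in 2D -/
lemma cramer (x y z : Fin 2 → ℤ) (i : Fin 2) :
    det2 y z * x i - det2 x z * y i + det2 x y * z i = 0 := by
  fin_cases i <;> simp [det2] <;> ring

/-- the vertex identity: the two halves at vertex `y` sum to the triple determinant product -/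
lemma vertex (x y z : Fin 2 → ℤ) (hxy : Unimod x y) (hyz : Unimod y z) :
    ih x y + oh y z = ((det2 x y * det2 y z * det2 z x : ℤ) : ℝ) := by
  have hyp : Primitive y := (unimod_prim hxy).2
  have hy0 : (y (idx y) : ℝ) ≠ 0 := by exact_mod_cast idx_ne_zero hyp
  have hc := cramer x y z (idx y)
  have h1 : det2 x y * det2 x y = 1 := by rcases hxy with h | h <;> rw [h] <;> norm_num
  have h2 : det2 y z * det2 y z = 1 := by rcases hyz with h | h <;> rw [h] <;> norm_num
  -- integer identity
  have hint : -(det2 x y) * x (idx y) - det2 y z * z (idx y)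
      = det2 x y * det2 y z * det2 z x * y (idx y) := by
    have hzx : det2 z x = - det2 x z := det2_comm x z
    linear_combination (-(det2 x y * det2 y z)) * hc + (det2 x y * x (idx y)) * h2
      + (det2 y z * z (idx y)) * h1 + (-(det2 x y * det2 y z * y (idx y))) * hzx
  unfold ih oh
  rw [← add_div, div_eq_iff hy0]
  have hcast := congrArg (Int.cast : ℤ → ℝ) hint
  push_cast at hcast
  push_cast
  linarith [hcast]

lemma k_pin (k n : ℤ) (s : ℝ) (hs : s = 2 * Real.pi * k)
    (hlo : 2 * Real.pi * ((n : ℝ) - 1) < s) (hhi : s < 2 * Real.pi * ((n : ℝ) + 1)) : k = n := by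
  have hpi := Real.pi_pos
  have l1 : ((n : ℝ) - 1) < (k : ℝ) := by nlinarith
  have l2 : ((k : ℝ)) < (n : ℝ) + 1 := by nlinarith
  have i1 : n - 1 < k := by exact_mod_cast l1
  have i2 : k < n + 1 := by exact_mod_cast l2
  omega

/-- the triangle relation -/
lemma triangle {x y z : Fin 2 → ℤ} (hxy : Unimod x y) (hyz : Unimod y z) (hzx : Unimod z x) :
    edgeVal x y + edgeVal y z + edgeVal z x = 0 := by
  have hx := zC_ne_zero (unimod_prim hxy).1
  have hy := zC_ne_zero (unimod_prim hxy).2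
  have hz := zC_ne_zero (unimod_prim hyz).2
  obtain ⟨k, hk⟩ := angle_sum x y z hx hy hz
  have v1 := vertex x y z hxy hyz
  have v2 := vertex y z x hyz hzx
  have v3 := vertex z x y hzx hxy
  have hsum : (oh x y + ih x y) + (oh y z + ih y z) + (oh z x + ih z x)
      = 3 * ((det2 x y : ℝ) * (det2 y z : ℝ) * (det2 z x : ℝ)) := by
    push_cast at v1 v2 v3
    ring_nf at v1 v2 v3 ⊢
    linarith [v1, v2, v3]
  have hpi := Real.pi_pos
  unfold edgeVal
  rw [show segAngle x y - π / 2 * (det2 x y : ℝ) - π / 6 * (oh x y + ih x y) +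
      (segAngle y z - π / 2 * (det2 y z : ℝ) - π / 6 * (oh y z + ih y z)) +
      (segAngle z x - π / 2 * (det2 z x : ℝ) - π / 6 * (oh z x + ih z x))
      = (segAngle x y + segAngle y z + segAngle z x)
        - π / 2 * ((det2 x y : ℝ) + (det2 y z : ℝ) + (det2 z x : ℝ))
        - π / 6 * ((oh x y + ih x y) + (oh y z + ih y z) + (oh z x + ih z x)) from by ring]
  have hpi := Real.pi_pos
  rcases hxy with h1 | h1 <;> rcases hyz with h2 | h2 <;> rcases hzx with h3 | h3
  · obtain ⟨a1, b1⟩ := segAngle_pos h1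
    obtain ⟨a2, b2⟩ := segAngle_pos h2
    obtain ⟨a3, b3⟩ := segAngle_pos h3
    have hkn : k = 1 := k_pin k 1 _ hk (by push_cast; nlinarith) (by push_cast; nlinarith)
    rw [hsum, hk, hkn, h1, h2, h3]; push_cast; ring
  · obtain ⟨a1, b1⟩ := segAngle_pos h1
    obtain ⟨a2, b2⟩ := segAngle_pos h2
    obtain ⟨a3, b3⟩ := segAngle_neg h3
    have hkn : k = 0 := k_pin k 0 _ hk (by push_cast; nlinarith) (by push_cast; nlinarith)
    rw [hsum, hk, hkn, h1, h2, h3]; push_cast; ring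
  · obtain ⟨a1, b1⟩ := segAngle_pos h1
    obtain ⟨a2, b2⟩ := segAngle_neg h2
    obtain ⟨a3, b3⟩ := segAngle_pos h3
    have hkn : k = 0 := k_pin k 0 _ hk (by push_cast; nlinarith) (by push_cast; nlinarith)
    rw [hsum, hk, hkn, h1, h2, h3]; push_cast; ring
  · obtain ⟨a1, b1⟩ := segAngle_pos h1
    obtain ⟨a2, b2⟩ := segAngle_neg h2
    obtain ⟨a3, b3⟩ := segAngle_neg h3
    have hkn : k = 0 := k_pin k 0 _ hk (by push_cast; nlinarith) (by push_cast; nlinarith)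
    rw [hsum, hk, hkn, h1, h2, h3]; push_cast; ring
  · obtain ⟨a1, b1⟩ := segAngle_neg h1
    obtain ⟨a2, b2⟩ := segAngle_pos h2
    obtain ⟨a3, b3⟩ := segAngle_pos h3
    have hkn : k = 0 := k_pin k 0 _ hk (by push_cast; nlinarith) (by push_cast; nlinarith)
    rw [hsum, hk, hkn, h1, h2, h3]; push_cast; ring
  · obtain ⟨a1, b1⟩ := segAngle_neg h1
    obtain ⟨a2, b2⟩ := segAngle_pos h2
    obtain ⟨a3, b3⟩ := segAngle_neg h3
    have hkn : k = 0 := k_pin k 0 _ hk (by push_cast; nlinarith) (by push_cast; nlinarith)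
    rw [hsum, hk, hkn, h1, h2, h3]; push_cast; ring
  · obtain ⟨a1, b1⟩ := segAngle_neg h1
    obtain ⟨a2, b2⟩ := segAngle_neg h2
    obtain ⟨a3, b3⟩ := segAngle_pos h3
    have hkn : k = 0 := k_pin k 0 _ hk (by push_cast; nlinarith) (by push_cast; nlinarith)
    rw [hsum, hk, hkn, h1, h2, h3]; push_cast; ring
  · obtain ⟨a1, b1⟩ := segAngle_neg h1
    obtain ⟨a2, b2⟩ := segAngle_neg h2
    obtain ⟨a3, b3⟩ := segAngle_neg h3
    have hkn : k = -1 := k_pin k (-1) _ hk (by push_cast; nlinarith) (by push_cast; nlinarith)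
    rw [hsum, hk, hkn, h1, h2, h3]; push_cast; ring

/-- if `det2 z w = 0` and `w` is primitive then `z` is an integer multiple of `w` -/
lemma parallel {z w : Fin 2 → ℤ} (hw : Primitive w) (h : det2 z w = 0) :
    ∃ k : ℤ, z 0 = k * w 0 ∧ z 1 = k * w 1 := by
  unfold det2 at h
  by_cases hw0 : w 0 = 0
  · have hw1 : w 1 = 1 ∨ w 1 = -1 := by
      unfold Primitive at hw
      rw [hw0] at hw
      simp [Int.gcd] at hw
      omega
    have hz0 : z 0 = 0 := by rcases hw1 with h1 | h1 <;> rw [h1] at h <;> rw [hw0] at h <;> omega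
    refine ⟨z 1 * w 1, by rw [hw0, hz0]; ring, ?_⟩
    rcases hw1 with h1 | h1 <;> rw [h1] <;> ring
  · have hco : IsCoprime (w 0) (w 1) := Int.isCoprime_iff_gcd_eq_one.mpr hw
    have hdvd : w 0 ∣ z 0 * w 1 := ⟨z 1, by linarith⟩
    have hdvd0 : w 0 ∣ z 0 := hco.dvd_of_dvd_mul_right hdvd
    obtain ⟨k, hk⟩ := hdvd0
    refine ⟨k, by rw [hk]; ring, ?_⟩
    have : w 0 * (k * w 1) = w 0 * z 1 := by rw [hk] at h; ring_nf; ring_nf at h; linarith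
    have := mul_left_cancel₀ hw0 this
    omega

def PSpec (u w : Fin 2 → ℤ) : Prop :=
  Unimod u w ∧ 1 ≤ nrm u ∧ 1 ≤ nrm (w - u) ∧ nrm u + nrm (w - u) = nrm w ∧
  ∀ v, Unimod v w → nrm v ≤ nrm w → (v = u ∨ v = -u ∨ v = w - u ∨ v = u - w)

lemma parent_exists {w : Fin 2 → ℤ} (hw : Primitive w) (h2 : 2 ≤ nrm w) :
    ∃ u, PSpec u w := by
  -- both coordinates are nonzero
  have hw0 : w 0 ≠ 0 := by
    intro h0
    have : (w 1).natAbs = 1 := by unfold Primitive at hw; rw [h0] at hw; simpa [Int.gcd] using hw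
    unfold nrm at h2
    rw [h0] at h2
    simp [this] at h2
  have hw1 : w 1 ≠ 0 := by
    intro h0
    have : (w 0).natAbs = 1 := by unfold Primitive at hw; rw [h0] at hw; simpa [Int.gcd] using hw
    unfold nrm at h2
    rw [h0] at h2
    simp [this] at h2
  obtain ⟨P, hPdef⟩ : ∃ x : ℤ, x = ((w 0).natAbs : ℤ) := ⟨_, rfl⟩
  obtain ⟨Q, hQdef⟩ : ∃ x : ℤ, x = ((w 1).natAbs : ℤ) := ⟨_, rfl⟩
  obtain ⟨s, hsdef⟩ : ∃ x : ℤ, x = (w 0).sign := ⟨_, rfl⟩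
  obtain ⟨t, htdef⟩ : ∃ x : ℤ, x = (w 1).sign := ⟨_, rfl⟩
  have hP0 : 0 < P := by
    have := Int.natAbs_pos.mpr hw0
    omega
  have hQ0 : 0 < Q := by
    have := Int.natAbs_pos.mpr hw1
    omega
  have hs : s * P = w 0 := by rw [hsdef, hPdef]; exact Int.sign_mul_natAbs (w 0)
  have ht : t * Q = w 1 := by rw [htdef, hQdef]; exact Int.sign_mul_natAbs (w 1)
  have hs1 : s = 1 ∨ s = -1 := by
    rcases lt_trichotomy (w 0) 0 with h | h | h
    · right; rw [hsdef]; exact Int.sign_eq_neg_one_of_neg h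
    · exact absurd h hw0
    · left; rw [hsdef]; exact Int.sign_eq_one_of_pos h
  have ht1 : t = 1 ∨ t = -1 := by
    rcases lt_trichotomy (w 1) 0 with h | h | h
    · right; rw [htdef]; exact Int.sign_eq_neg_one_of_neg h
    · exact absurd h hw1
    · left; rw [htdef]; exact Int.sign_eq_one_of_pos h
  have hss : s * s = 1 := by rcases hs1 with h | h <;> rw [h] <;> norm_num
  have htt : t * t = 1 := by rcases ht1 with h | h <;> rw [h] <;> norm_num
  have hsabs : s.natAbs = 1 := by rcases hs1 with h | h <;> rw [h] <;> rfl
  have htabs : t.natAbs = 1 := by rcases ht1 with h | h <;> rw [h] <;> rfl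
  -- Bezout
  have hcop : IsCoprime Q P := by
    rw [Int.isCoprime_iff_gcd_eq_one]
    have hgg : Int.gcd Q P = Int.gcd (w 1) (w 0) := by
      rw [hQdef, hPdef]; simp [Int.gcd, Int.natAbs_natCast, Int.natAbs_abs]
    rw [hgg, Int.gcd_comm]
    exact hw
  obtain ⟨m, n, hmn⟩ := hcop
  obtain ⟨a, hadef⟩ : ∃ x : ℤ, x = (m - 1) % P + 1 := ⟨_, rfl⟩
  have ha1 : 1 ≤ a := by
    have := Int.emod_nonneg (m - 1) (ne_of_gt hP0)
    omega
  have ha2 : a ≤ P := by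
    have := Int.emod_lt_of_pos (m - 1) hP0
    omega
  have hadef2 : a = m - P * ((m - 1) / P) := by
    rw [hadef, Int.emod_def]; ring
  have hdvd : P ∣ (a * Q - 1) := by
    refine ⟨-n - ((m - 1) / P) * Q, ?_⟩
    rw [hadef2]; linear_combination hmn
  obtain ⟨b, hbdef⟩ : ∃ x : ℤ, x = (a * Q - 1) / P := ⟨_, rfl⟩
  have hb : P * b = a * Q - 1 := by rw [hbdef]; exact Int.mul_ediv_cancel' hdvd
  have haQ : 1 ≤ a * Q := by
    have := mul_le_mul ha1 (le_refl Q) (by omega) (by omega)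
    omega
  have hb0 : 0 ≤ b := by
    by_contra hc
    push_neg at hc
    have hPb : P * b ≤ P * (-1) := mul_le_mul_of_nonneg_left (by omega) hP0.le
    linarith [haQ, hb]
  have hbQ : b ≤ Q - 1 := by
    by_contra hc
    push_neg at hc
    have h1 : P * Q ≤ P * b := mul_le_mul_of_nonneg_left (by omega) hP0.le
    have h2 : a * Q ≤ P * Q := mul_le_mul_of_nonneg_right ha2 hQ0.le
    linarith [hb]
  -- determinant of the candidate with w
  have hdu : det2 ![s * a, t * b] w = s * t := by
    unfold det2
    simp only [Matrix.cons_val_zero, Matrix.cons_val_one, Matrix.head_cons]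
    rw [← hs, ← ht]
    linear_combination (-(s * t)) * hb
  -- natAbs of the coordinates
  have habs0 : (s * a).natAbs = a.natAbs := by rw [Int.natAbs_mul, hsabs, one_mul]
  have habs1 : (t * b).natAbs = b.natAbs := by rw [Int.natAbs_mul, htabs, one_mul]
  -- the candidate parent
  refine ⟨![s * a, t * b], ?_, ?_, ?_, ?_, ?_⟩
  case _ =>
    rcases hs1 with h | h <;> rcases ht1 with h' | h' <;>
      [left; right; right; left] <;> rw [hdu, h, h'] <;> norm_num
  case _ =>
    unfold nrm
    simp only [Matrix.cons_val_zero, Matrix.cons_val_one, Matrix.head_cons]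
    rw [habs0, habs1]
    omega
  case _ =>
    have h1 : (w - ![s * a, t * b]) 1 = t * (Q - b) := by
      simp only [Pi.sub_apply, Matrix.cons_val_one, Matrix.head_cons, Matrix.cons_val_zero]
      rw [← ht]; ring
    have h1' : ((w - ![s * a, t * b]) 1).natAbs = (Q - b).natAbs := by
      rw [h1, Int.natAbs_mul, htabs, one_mul]
    have : 1 ≤ (Q - b).natAbs := by omega
    unfold nrm
    omega
  case _ =>
    have h0 : (w - ![s * a, t * b]) 0 = s * (P - a) := by
      simp only [Pi.sub_apply, Matrix.cons_val_zero]
      rw [← hs]; ring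
    have h1 : (w - ![s * a, t * b]) 1 = t * (Q - b) := by
      simp only [Pi.sub_apply, Matrix.cons_val_one, Matrix.head_cons, Matrix.cons_val_zero]
      rw [← ht]; ring
    unfold nrm
    rw [h0, h1, Int.natAbs_mul, Int.natAbs_mul, hsabs, htabs]
    simp only [Matrix.cons_val_zero, Matrix.cons_val_one, Matrix.head_cons]
    rw [habs0, habs1]
    omega
  case _ =>
    -- classification of small neighbours
    intro v hUv hnv
    have he1 : det2 v w = 1 ∨ det2 v w = -1 := hUv
    obtain ⟨σ, hσval⟩ : ∃ x : ℤ, x = det2 v w * (s * t) := ⟨_, rfl⟩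
    have hσ1 : σ = 1 ∨ σ = -1 := by
      rcases he1 with h | h <;> rcases hs1 with h' | h' <;> rcases ht1 with h'' | h'' <;>
        rw [hσval, h, h', h''] <;> norm_num
    have hdu' : s * a * w 1 - t * b * w 0 = s * t := by
      rw [← hs, ← ht]; linear_combination (-(s * t)) * hb
    have hdetlin : det2 ![v 0 - σ * (s * a), v 1 - σ * (t * b)] w = 0 := by
      have hex : det2 ![v 0 - σ * (s * a), v 1 - σ * (t * b)] w
          = det2 v w - σ * (s * a * w 1 - t * b * w 0) := by
        unfold det2
        simp only [Matrix.cons_val_zero, Matrix.cons_val_one, Matrix.head_cons]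
        ring
      rw [hex, hdu', hσval]
      linear_combination (-(det2 v w) * (t * t)) * hss + (-(det2 v w)) * htt
    obtain ⟨k, hk0, hk1⟩ := parallel hw hdetlin
    simp only [Matrix.cons_val_zero, Matrix.cons_val_one, Matrix.head_cons] at hk0 hk1
    have hv0 : v 0 = s * (σ * a + k * P) := by
      rw [← hs] at hk0
      linarith [hk0, (by ring : s * (σ * a + k * P) = σ * (s * a) + k * (s * P))]
    have hv1 : v 1 = t * (σ * b + k * Q) := by
      rw [← ht] at hk1
      linarith [hk1, (by ring : t * (σ * b + k * Q) = σ * (t * b) + k * (t * Q))]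
    -- norms in ℤ
    have hnv' : |σ * a + k * P| + |σ * b + k * Q| ≤ P + Q := by
      unfold nrm at hnv
      rw [hv0, hv1, Int.natAbs_mul, Int.natAbs_mul, hsabs, htabs] at hnv
      have h1 := Int.abs_eq_natAbs (σ * a + k * P)
      have h2 := Int.abs_eq_natAbs (σ * b + k * Q)
      omega
    have hA1 := le_abs_self (σ * a + k * P)
    have hA2 := neg_abs_le (σ * a + k * P)
    have hB1 := le_abs_self (σ * b + k * Q)
    have hB2 := neg_abs_le (σ * b + k * Q)
    -- now eliminate cases on σ and k
    have hk4 : (σ = 1 ∧ k = 0) ∨ (σ = -1 ∧ k = 0) ∨ (σ = -1 ∧ k = 1) ∨ (σ = 1 ∧ k = -1) := by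
      rcases hσ1 with hσ | hσ <;> rw [hσ] at hA1 hA2 hB1 hB2 hnv'
      · rcases lt_trichotomy k 0 with hkk | hkk | hkk
        · rcases eq_or_lt_of_le (by omega : k ≤ -1) with hk1' | hk1'
          · exact Or.inr (Or.inr (Or.inr ⟨hσ, hk1'⟩))
          · exfalso
            have hnl1 : k * P ≤ -2 * P := mul_le_mul_of_nonneg_right (by omega) hP0.le
            have hnl2 : k * Q ≤ -2 * Q := mul_le_mul_of_nonneg_right (by omega) hQ0.le
            linarith
        · exact Or.inl ⟨hσ, hkk⟩
        · exfalso
          have hnl1 : 1 * P ≤ k * P := mul_le_mul_of_nonneg_right (by omega) hP0.le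
          have hnl2 : 1 * Q ≤ k * Q := mul_le_mul_of_nonneg_right (by omega) hQ0.le
          linarith
      · rcases lt_trichotomy k 0 with hkk | hkk | hkk
        · exfalso
          have hnl1 : k * P ≤ -1 * P := mul_le_mul_of_nonneg_right (by omega) hP0.le
          have hnl2 : k * Q ≤ -1 * Q := mul_le_mul_of_nonneg_right (by omega) hQ0.le
          linarith
        · exact Or.inr (Or.inl ⟨hσ, hkk⟩)
        · rcases eq_or_lt_of_le (by omega : 1 ≤ k) with hk1' | hk1'
          · exact Or.inr (Or.inr (Or.inl ⟨hσ, hk1'.symm⟩))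
          · exfalso
            have hnl1 : 2 * P ≤ k * P := mul_le_mul_of_nonneg_right (by omega) hP0.le
            have hnl2 : 2 * Q ≤ k * Q := mul_le_mul_of_nonneg_right (by omega) hQ0.le
            linarith
    have hfun : ∀ x : Fin 2 → ℤ, v 0 = x 0 → v 1 = x 1 → v = x := by
      intro x h0 h1
      funext i
      fin_cases i
      · exact h0
      · exact h1
    rcases hk4 with ⟨hσ, hkk⟩ | ⟨hσ, hkk⟩ | ⟨hσ, hkk⟩ | ⟨hσ, hkk⟩ <;> rw [hσ, hkk] at hv0 hv1
    · left
      apply hfun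
      · simp only [Matrix.cons_val_zero]; rw [hv0]; ring
      · simp only [Matrix.cons_val_one, Matrix.head_cons, Matrix.cons_val_zero]; rw [hv1]; ring
    · right; left
      apply hfun
      · simp only [Pi.neg_apply, Matrix.cons_val_zero]; rw [hv0]; ring
      · simp only [Pi.neg_apply, Matrix.cons_val_one, Matrix.head_cons, Matrix.cons_val_zero]; rw [hv1]; ring
    · right; right; left
      apply hfun
      · simp only [Pi.sub_apply, Matrix.cons_val_zero]; rw [hv0, ← hs]; ring
      · simp only [Pi.sub_apply, Matrix.cons_val_one, Matrix.head_cons, Matrix.cons_val_zero]; rw [hv1, ← ht]; ring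
    · right; right; right
      apply hfun
      · simp only [Pi.sub_apply, Matrix.cons_val_zero]; rw [hv0, ← hs]; ring
      · simp only [Pi.sub_apply, Matrix.cons_val_one, Matrix.head_cons, Matrix.cons_val_zero]; rw [hv1, ← ht]; ring

/-- base case: for unit vectors the edge value vanishes -/
lemma edgeVal_units {v w : Fin 2 → ℤ} (hU : Unimod v w) (hv : nrm v = 1) (hw : nrm w = 1) :
    edgeVal v w = 0 := by
  have hvE : (v 0 = 1 ∧ v 1 = 0) ∨ (v 0 = -1 ∧ v 1 = 0) ∨ (v 0 = 0 ∧ v 1 = 1) ∨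
      (v 0 = 0 ∧ v 1 = -1) := by unfold nrm at hv; omega
  have hwE : (w 0 = 1 ∧ w 1 = 0) ∨ (w 0 = -1 ∧ w 1 = 0) ∨ (w 0 = 0 ∧ w 1 = 1) ∨
      (w 0 = 0 ∧ w 1 = -1) := by unfold nrm at hw; omega
  unfold Unimod det2 at hU
  rcases hvE with ⟨a0, a1⟩ | ⟨a0, a1⟩ | ⟨a0, a1⟩ | ⟨a0, a1⟩ <;>
    rcases hwE with ⟨b0, b1⟩ | ⟨b0, b1⟩ | ⟨b0, b1⟩ | ⟨b0, b1⟩ <;>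
    rw [a0, a1, b0, b1] at hU <;>
    first
      | (exfalso; omega)
      | (unfold edgeVal oh ih idx segAngle det2
         norm_num [a0, a1, b0, b1, Complex.div_I, Complex.arg_I, Complex.arg_neg_I,
           Complex.arg_one, Complex.arg_neg_one, div_neg, neg_div, neg_neg])

instance (v : Fin 2 → ℤ) : Decidable (Primitive v) :=
  inferInstanceAs (Decidable (Int.gcd (v 0) (v 1) = 1))

noncomputable def par (w : Fin 2 → ℤ) : Fin 2 → ℤ :=
  if h : Primitive w ∧ 2 ≤ nrm w then (parent_exists h.1 h.2).choose else ![1, 0]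

lemma par_spec {w : Fin 2 → ℤ} (h1 : Primitive w) (h2 : 2 ≤ nrm w) : PSpec (par w) w := by
  unfold par
  rw [dif_pos (⟨h1, h2⟩ : Primitive w ∧ 2 ≤ nrm w)]
  exact (parent_exists h1 h2).choose_spec

noncomputable def G (w : Fin 2 → ℤ) : ℝ :=
  if h : Primitive w ∧ 2 ≤ nrm w then G (par w) + edgeVal (par w) w else 0
termination_by nrm w
decreasing_by
  · obtain ⟨_, n1, n2, n3, _⟩ := par_spec h.1 h.2
    omega

lemma G_eq (w : Fin 2 → ℤ) :
    G w = if _h : Primitive w ∧ 2 ≤ nrm w then G (par w) + edgeVal (par w) w else 0 := by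
  rw [G]

lemma nrm_neg (u : Fin 2 → ℤ) : nrm (-u) = nrm u := by
  unfold nrm; simp

lemma nrm_sub_comm (u w : Fin 2 → ℤ) : nrm (u - w) = nrm (w - u) := by
  unfold nrm
  simp only [Pi.sub_apply]
  omega

def Key (v w : Fin 2 → ℤ) : Prop := edgeVal v w = G w - G v

theorem key (n : ℕ) : ∀ v w : Fin 2 → ℤ, nrm v + nrm w ≤ n → Unimod v w → Key v w := by
  induction n using Nat.strong_induction_on with
  | _ n IH =>
  have asym : ∀ v w, nrm v + nrm w ≤ n → nrm v ≤ nrm w → Unimod v w → Key v w := by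
    intro v w hm hvw hU
    have hPv := (unimod_prim hU).1
    have hPw := (unimod_prim hU).2
    have hv1 := prim_nrm_pos hPv
    by_cases h2 : 2 ≤ nrm w
    · obtain ⟨hUu, hn1, hn2, hn3, hclass⟩ := par_spec hPw h2
      have hG : G w = G (par w) + edgeVal (par w) w := by
        rw [G_eq, dif_pos (⟨hPw, h2⟩ : Primitive w ∧ 2 ≤ nrm w)]
      have k1 : Key (par w) w := by unfold Key; rw [hG]; ring
      -- determinant transfers
      have d1 : det2 (w - par w) (par w) = - det2 (par w) w := by
        unfold det2; simp only [Pi.sub_apply]; ring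
      have d2 : det2 w (w - par w) = det2 (par w) w := by
        unfold det2; simp only [Pi.sub_apply]; ring
      have d3 : det2 (-(par w)) (w - par w) = - det2 (par w) w := by
        unfold det2; simp only [Pi.sub_apply, Pi.neg_apply]; ring
      have d4 : det2 w (-(par w)) = det2 (par w) w := by
        unfold det2; simp only [Pi.neg_apply]; ring
      have d5 : det2 (par w - w) (par w) = det2 (par w) w := by
        unfold det2; simp only [Pi.sub_apply]; ring
      have d6 : det2 w (par w - w) = - det2 (par w) w := by
        unfold det2; simp only [Pi.sub_apply]; ring
      have uo : ∀ x y : Fin 2 → ℤ, (det2 x y = det2 (par w) w ∨ det2 x y = - det2 (par w) w) →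
          Unimod x y := by
        intro x y h
        rcases h with h | h <;> rcases hUu with h' | h' <;> unfold Unimod <;> rw [h, h'] <;> simp
      have hU1 : Unimod (w - par w) (par w) := uo _ _ (Or.inr d1)
      have hU2 : Unimod w (w - par w) := uo _ _ (Or.inl d2)
      have hU3 : Unimod (-(par w)) (w - par w) := uo _ _ (Or.inr d3)
      have hU4 : Unimod w (-(par w)) := uo _ _ (Or.inl d4)
      have hU5 : Unimod (par w - w) (par w) := uo _ _ (Or.inl d5)
      have hU6 : Unimod w (par w - w) := uo _ _ (Or.inr d6)
      -- measures
      have hnw : nrm w ≤ n - 1 := by omega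
      have hnn : 1 ≤ n := by omega
      -- Key (w - par w) w
      have k12 : Key (w - par w) (par w) := by
        refine IH (n - 1) (by omega) _ _ (by rw [nrm_sub_comm] at hn3 ⊢; omega) hU1
      have t1 := triangle hU1 hUu hU2
      have b1 := edgeVal_antisymm hU2
      have k2 : Key (w - par w) w := by
        unfold Key at k12 k1 ⊢
        linarith [t1, k12, k1, b1]
      -- Key (-(par w)) w
      have k23 : Key (-(par w)) (w - par w) := by
        refine IH (n - 1) (by omega) _ _ (by rw [nrm_neg]; omega) hU3
      have t2 := triangle hU3 (unimod_symm hU2) hU4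
      have b2 := edgeVal_antisymm hU4
      have k3 : Key (-(par w)) w := by
        unfold Key at k23 k2 ⊢
        have b3 := edgeVal_antisymm hU2
        linarith [t2, k23, k2, b2, b3]
      -- Key (par w - w) w
      have k45 : Key (par w - w) (par w) := by
        refine IH (n - 1) (by omega) _ _ (by rw [nrm_sub_comm]; omega) hU5
      have t3 := triangle hU5 hUu hU6
      have b4 := edgeVal_antisymm hU6
      have k4 : Key (par w - w) w := by
        unfold Key at k45 k1 ⊢
        linarith [t3, k45, k1, b4]
      rcases hclass v hU hvw with rfl | rfl | rfl | rfl
      · exact k1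
      · exact k3
      · exact k2
      · exact k4
    · -- unit case
      have hw1 : nrm w = 1 := by
        have := prim_nrm_pos hPw
        omega
      have hv1' : nrm v = 1 := by omega
      unfold Key
      have g1 : G w = 0 := by rw [G_eq, dif_neg]; intro h; omega
      have g2 : G v = 0 := by
        rw [G_eq, dif_neg]; intro h; omega
      rw [g1, g2, edgeVal_units hU hv1' hw1]
      ring
  intro v w hm hU
  rcases le_or_gt (nrm v) (nrm w) with h | h
  · exact asym v w hm h hU
  · have hk := asym w v (by omega) h.le (unimod_symm hU)
    have hb := edgeVal_antisymm hU
    unfold Key at hk ⊢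
    linarith


lemma key' {v w : Fin 2 → ℤ} (h : Unimod v w) : edgeVal v w = G w - G v :=
  key (nrm v + nrm w) v w le_rfl h

end RotAux

open RotAux Real in
theorem rotation_number_of_unimodular_sequence
    (d : ℕ) [NeZero d] (v : Fin d → Fin 2 → ℤ)
    (hprim : ∀ i, Primitive (v i))
    (ε : Fin d → ℤ) (hε : ∀ i, ε i = det2 (v i) (v (i + 1)))
    (hεuni : ∀ i, ε i = 1 ∨ ε i = -1)
    (a : Fin d → ℚ)
    (ha : ∀ i, a i = (ε (i - 1) : ℚ)⁻¹ * (ε i : ℚ)⁻¹ * (det2 (v (i + 1)) (v (i - 1)) : ℚ)) :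
    rotationNumber v = (1 / 12) * ∑ i : Fin d, (3 * (ε i : ℝ) + (a i : ℝ)) := by
  have hU : ∀ i : Fin d, Unimod (v i) (v (i + 1)) := by
    intro i
    unfold Unimod
    rw [← hε i]
    exact hεuni i
  -- decompose each angle
  have hseg : ∀ i : Fin d, segAngle (v i) (v (i + 1)) =
      edgeVal (v i) (v (i + 1)) + π / 2 * (ε i : ℝ)
        + π / 6 * (oh (v i) (v (i + 1)) + ih (v i) (v (i + 1))) := by
    intro i
    unfold edgeVal
    rw [← hε i]
    ring
  have hsum : ∑ i : Fin d, segAngle (v i) (v (i + 1)) =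
      (∑ i : Fin d, edgeVal (v i) (v (i + 1)))
      + π / 2 * (∑ i : Fin d, (ε i : ℝ))
      + π / 6 * ((∑ i : Fin d, oh (v i) (v (i + 1))) + ∑ i : Fin d, ih (v i) (v (i + 1))) := by
    rw [Finset.sum_congr rfl (fun i _ => hseg i), Finset.sum_add_distrib,
      Finset.sum_add_distrib, ← Finset.mul_sum, ← Finset.mul_sum, Finset.sum_add_distrib]
  -- the edge values telescope
  have htel : ∑ i : Fin d, edgeVal (v i) (v (i + 1)) = 0 := by
    have h1 : ∀ i : Fin d, edgeVal (v i) (v (i + 1)) = G (v (i + 1)) - G (v i) :=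
      fun i => key' (hU i)
    rw [Finset.sum_congr rfl (fun i _ => h1 i), Finset.sum_sub_distrib]
    have h2 : ∑ i : Fin d, G (v (i + 1)) = ∑ i : Fin d, G (v i) :=
      Fintype.sum_equiv (Equiv.addRight (1 : Fin d)) _ _ (fun i => by simp)
    rw [h2]
    ring
  -- reindex the incoming halves
  have hre : ∑ i : Fin d, ih (v i) (v (i + 1)) = ∑ i : Fin d, ih (v (i - 1)) (v i) := by
    refine Fintype.sum_equiv (Equiv.addRight (1 : Fin d)) _ _ (fun i => ?_)
    simp
  -- the vertex identity
  have hva : ∀ i : Fin d, ih (v (i - 1)) (v i) + oh (v i) (v (i + 1)) = (a i : ℝ) := by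
    intro i
    have hx : det2 (v (i - 1)) (v i) = ε (i - 1) := by
      have h := hε (i - 1)
      rw [sub_add_cancel] at h
      exact h.symm
    have hy : det2 (v i) (v (i + 1)) = ε i := (hε i).symm
    have hUx : Unimod (v (i - 1)) (v i) := by
      unfold Unimod
      rw [hx]
      exact hεuni (i - 1)
    have hv := vertex (v (i - 1)) (v i) (v (i + 1)) hUx (hU i)
    rw [hv, hx, hy, ha i]
    rcases hεuni (i - 1) with h1 | h1 <;> rcases hεuni i with h2 | h2 <;>
      rw [h1, h2] <;> push_cast <;> ring
  have hsa : (∑ i : Fin d, oh (v i) (v (i + 1))) + ∑ i : Fin d, ih (v i) (v (i + 1))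
      = ∑ i : Fin d, (a i : ℝ) := by
    rw [hre, ← Finset.sum_add_distrib]
    refine Finset.sum_congr rfl (fun i _ => ?_)
    rw [add_comm, hva i]
  -- put everything together
  have hpi := Real.pi_pos
  unfold rotationNumber
  rw [hsum, htel, hsa]
  rw [Finset.sum_add_distrib, ← Finset.mul_sum]
  field_simp
  ring
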